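/- Let g be a short sl₂-Lie superalgebra. Then the triple product (m,n,r) := −[[m, f n], r] on M = {α ∈ g : hα = α} satisfies the super Jordan-triple-like identity: (m,n,(r,s,t)) = ((m,n,r),s,t) + (−1)^{|r|(|m|+|n|)+|m||n|}(r,(n,m,s),t) + (−1)^{(|m|+|n|)(|r|+|s|)}(r,s,(m,n,t)) for all homogeneous m,n,r,s,t ∈ M. -/

import Mathlib

/-- The Koszul sign `(-1)^{ij}` for parities `i j : ZMod 2`. -/
noncomputable def sg (i j : ZMod 2) : ℂ := (-1 : ℂ) ^ (i.val * j.val)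

lemma sg_symm (i j : ZMod 2) : sg i j = sg j i := by
  unfold sg; rw [Nat.mul_comm]

/-- A short `sl₂`-Lie superalgebra: a Z/2-graded complex Lie superalgebra `(G, B)`
together with operators `E F H` satisfying the `sl₂` relations, acting by even
derivations, such that `G` is spanned by `H`-eigenvectors with eigenvalues in
`{-2,-1,0,1,2}` (which, over `ℂ`, is exactly the condition that `G` decomposes as an
`sl₂`-module into copies of the adjoint, the natural and the trivial representations,
i.e. `G ≅ sl₂⊗J ⊕ V⊗M ⊕ D`). -/
structure ShortSL2 {G : Type} [AddCommGroup G] [Module ℂ G]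
    (gr : ZMod 2 → Submodule ℂ G)
    (B : G →ₗ[ℂ] G →ₗ[ℂ] G)
    (E F H : G →ₗ[ℂ] G) : Prop where
  bracket_grade : ∀ i j : ZMod 2, ∀ a ∈ gr i, ∀ b ∈ gr j, B a b ∈ gr (i + j)
  antisymm : ∀ i j : ZMod 2, ∀ a ∈ gr i, ∀ b ∈ gr j, B a b = -(sg i j • B b a)
  jacobi : ∀ i j : ZMod 2, ∀ a ∈ gr i, ∀ b ∈ gr j, ∀ c : G,
      B a (B b c) = B (B a b) c + sg i j • B b (B a c)
  grade_spans : ∀ x : G, ∃ x0 x1 : G, x0 ∈ gr 0 ∧ x1 ∈ gr 1 ∧ x = x0 + x1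
  rel_HE : H ∘ₗ E - E ∘ₗ H = 2 • E
  rel_HF : H ∘ₗ F - F ∘ₗ H = -(2 • F)
  rel_EF : E ∘ₗ F - F ∘ₗ E = H
  derE : ∀ x y : G, E (B x y) = B (E x) y + B x (E y)
  derF : ∀ x y : G, F (B x y) = B (F x) y + B x (F y)
  derH : ∀ x y : G, H (B x y) = B (H x) y + B x (H y)
  evenE : ∀ i : ZMod 2, ∀ x ∈ gr i, E x ∈ gr i
  evenF : ∀ i : ZMod 2, ∀ x ∈ gr i, F x ∈ gr i
  evenH : ∀ i : ZMod 2, ∀ x ∈ gr i, H x ∈ gr i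
  short : ∀ x : G, ∃ x2 x1 x0 y1 y2 : G,
      H x2 = (2 : ℂ) • x2 ∧ H x1 = x1 ∧ H x0 = 0 ∧
      H y1 = (-1 : ℂ) • y1 ∧ H y2 = (-2 : ℂ) • y2 ∧ x = x2 + x1 + x0 + y1 + y2

/-- The triple product `(m,n,r) := −[[m, f n], r]` on `M = {m : H m = m}`. -/
noncomputable def trip {G : Type} [AddCommGroup G] [Module ℂ G]
    (B : G →ₗ[ℂ] G →ₗ[ℂ] G) (F : G →ₗ[ℂ] G) (m n r : G) : G :=
  -(B (B m (F n)) r)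

section helpers

variable {G : Type} [AddCommGroup G] [Module ℂ G]

noncomputable def qop (H : G →ₗ[ℂ] G) (c : ℂ) : G →ₗ[ℂ] G :=
  H - c • (LinearMap.id : G →ₗ[ℂ] G)

lemma chain5 (H : G →ₗ[ℂ] G) (l : ℂ) (x : G) (hx : H x = l • x) :
    (qop H 2 ∘ₗ qop H 1 ∘ₗ qop H 0 ∘ₗ qop H (-1) ∘ₗ qop H (-2)) x
      = ((l-2)*(l-1)*l*(l+1)*(l+2)) • x := by
  have hq : ∀ (c : ℂ) (α : ℂ), qop H c (α • x) = (α * (l - c)) • x := by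
    intro c α
    simp [qop, LinearMap.sub_apply, LinearMap.smul_apply, map_smul, hx, smul_smul, sub_smul,
      mul_sub, smul_sub]
  have h0 : x = (1:ℂ) • x := (one_smul ℂ x).symm
  simp only [LinearMap.comp_apply]
  rw [h0, hq, hq, hq, hq, hq]
  ring_nf
  rw [one_smul]

lemma short_eig_zero {H : G →ₗ[ℂ] G}
    (hsh : ∀ x : G, ∃ x2 x1 x0 y1 y2 : G,
      H x2 = (2 : ℂ) • x2 ∧ H x1 = x1 ∧ H x0 = 0 ∧
      H y1 = (-1 : ℂ) • y1 ∧ H y2 = (-2 : ℂ) • y2 ∧ x = x2 + x1 + x0 + y1 + y2)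
    (c : ℂ) (hc : (c-2)*(c-1)*c*(c+1)*(c+2) ≠ 0)
    (v : G) (hv : H v = c • v) : v = 0 := by
  obtain ⟨x2, x1, x0, y1, y2, h2, h1, h0, hm1, hm2, hsum⟩ := hsh v
  set P := qop H 2 ∘ₗ qop H 1 ∘ₗ qop H 0 ∘ₗ qop H (-1) ∘ₗ qop H (-2) with hP
  have hPv : P v = ((c-2)*(c-1)*c*(c+1)*(c+2)) • v := chain5 H c v hv
  have hPv0 : P v = 0 := by
    rw [hsum]
    simp only [map_add]
    rw [chain5 H 2 x2 h2, chain5 H 1 x1 (by rw [h1, one_smul]),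
      chain5 H 0 x0 (by rw [h0, zero_smul]), chain5 H (-1) y1 hm1, chain5 H (-2) y2 hm2]
    norm_num
  rw [hPv0] at hPv
  exact (smul_eq_zero.mp hPv.symm).resolve_left hc

end helpers

section lemmas

variable {G : Type} [AddCommGroup G] [Module ℂ G]
  {gr : ZMod 2 → Submodule ℂ G} {B : G →ₗ[ℂ] G →ₗ[ℂ] G} {E F H : G →ₗ[ℂ] G}

lemma apHE (h : ShortSL2 gr B E F H) (x : G) :
    H (E x) = E (H x) + (2:ℂ) • E x := by
  have := congrArg (fun L : G →ₗ[ℂ] G => L x) h.rel_HE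
  simp only [LinearMap.sub_apply, LinearMap.comp_apply, LinearMap.smul_apply] at this
  have h2 : (2:ℕ) • E x = (2:ℂ) • E x := by
    rw [← Nat.cast_smul_eq_nsmul ℂ]; norm_num
  rw [sub_eq_iff_eq_add] at this
  rw [this, h2]
  exact add_comm _ _

lemma apHF (h : ShortSL2 gr B E F H) (x : G) :
    H (F x) = F (H x) - (2:ℂ) • F x := by
  have := congrArg (fun L : G →ₗ[ℂ] G => L x) h.rel_HF
  simp only [LinearMap.sub_apply, LinearMap.comp_apply, LinearMap.neg_apply,
    LinearMap.smul_apply] at this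
  have h2 : (2:ℕ) • F x = (2:ℂ) • F x := by
    rw [← Nat.cast_smul_eq_nsmul ℂ]; norm_num
  rw [sub_eq_iff_eq_add] at this
  rw [this, h2]
  abel

lemma apEF (h : ShortSL2 gr B E F H) (x : G) :
    E (F x) = F (E x) + H x := by
  have := congrArg (fun L : G →ₗ[ℂ] G => L x) h.rel_EF
  simp only [LinearMap.sub_apply, LinearMap.comp_apply] at this
  rw [sub_eq_iff_eq_add] at this
  rw [this]
  exact add_comm _ _

lemma E_w1 (h : ShortSL2 gr B E F H) {m : G} (hm : H m = m) : E m = 0 := by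
  refine short_eig_zero h.short 3 (by norm_num) _ ?_
  rw [apHE h, hm]
  rw [show (3:ℂ) = 1 + 2 by norm_num, add_smul, one_smul]

lemma HF_w1 (h : ShortSL2 gr B E F H) {m : G} (hm : H m = m) :
    H (F m) = (-1:ℂ) • F m := by
  rw [apHF h, hm, show (-1:ℂ) = 1 - 2 by norm_num, sub_smul, one_smul]

lemma F_wm1 (h : ShortSL2 gr B E F H) {v : G} (hv : H v = (-1:ℂ) • v) : F v = 0 := by
  refine short_eig_zero h.short (-3) (by norm_num) _ ?_
  rw [apHF h, hv, map_smul]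
  rw [show (-3:ℂ) = -1 - 2 by norm_num, sub_smul]

lemma FE_wm1 (h : ShortSL2 gr B E F H) {v : G} (hv : H v = (-1:ℂ) • v) :
    F (E v) = v := by
  have h1 := apEF h v
  rw [F_wm1 h hv, map_zero, hv] at h1
  have : F (E v) = -((-1:ℂ) • v) := by
    rw [eq_comm, neg_eq_iff_add_eq_zero, add_comm, ← h1]
  rw [this, neg_smul, one_smul, neg_neg]

lemma EF_w1 (h : ShortSL2 gr B E F H) {m : G} (hm : H m = m) : E (F m) = m := by
  rw [apEF h, E_w1 h hm, map_zero, hm, zero_add]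

lemma b3_zero (h : ShortSL2 gr B E F H) {m n s : G}
    (hm : H m = m) (hn : H n = n) (hs : H s = s) : B (B m n) s = 0 := by
  refine short_eig_zero h.short 3 (by norm_num) _ ?_
  have h2 : H (B m n) = (2:ℂ) • B m n := by
    rw [h.derH, hm, hn, two_smul]
  rw [h.derH, h2, hs, map_smul, LinearMap.smul_apply,
    show (3:ℂ) = 2 + 1 by norm_num, add_smul, one_smul]

lemma key_lemma (h : ShortSL2 gr B E F H) {pm pn : ZMod 2} {m n s : G}
    (hmg : m ∈ gr pm) (hng : n ∈ gr pn)
    (hm : H m = m) (hn : H n = n) (hs : H s = s) :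
    B (B m (F n)) (F s) = sg pm pn • F (B (B n (F m)) s) := by
  have hFn := HF_w1 h hn
  have hFm := HF_w1 h hm
  have hFs := HF_w1 h hs
  -- weight of a := B m (F n) is 0, similarly b := B n (F m)
  have ha0 : H (B m (F n)) = 0 := by
    rw [h.derH, hm, hFn, map_smul, neg_smul, one_smul, add_neg_cancel]
  have hb0 : H (B n (F m)) = 0 := by
    rw [h.derH, hn, hFm, map_smul, neg_smul, one_smul, add_neg_cancel]
  -- z := B (B n (F m)) s has weight 1
  have hz1 : H (B (B n (F m)) s) = B (B n (F m)) s := by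
    rw [h.derH, hb0, hs]
    simp
  -- L := B (B m (F n)) (F s) has weight -1
  have hL : H (B (B m (F n)) (F s)) = (-1:ℂ) • B (B m (F n)) (F s) := by
    rw [h.derH, ha0, hFs, map_smul]
    simp
  -- E of L
  have hEL : E (B (B m (F n)) (F s)) = -(B (B (F m) n) s) := by
    rw [h.derE, h.derE m (F n), E_w1 h hm, EF_w1 h hn, EF_w1 h hs]
    simp only [map_zero, LinearMap.zero_apply, zero_add]
    -- now : B (B m n) (F s) + B (B m (F n)) s = -(B (B (F m) n) s)
    have h30 : B (B m n) s = 0 := b3_zero h hm hn hs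
    have hd := h.derF (B m n) s
    rw [h30, map_zero, h.derF m n, map_add, LinearMap.add_apply] at hd
    -- hd : 0 = B (B (F m) n) s + B (B m (F n)) s + B (B m n) (F s)
    have : B (B m n) (F s) = -(B (B (F m) n) s) - B (B m (F n)) s := by
      rw [eq_sub_iff_add_eq, eq_neg_iff_add_eq_zero]
      rw [eq_comm] at hd
      rw [← hd]
      abel
    rw [this]
    abel
  -- E of z is 0
  have hEz : E (B (B n (F m)) s) = 0 := by
    rw [h.derE, h.derE n (F m), E_w1 h hn, EF_w1 h hm, E_w1 h hs]
    simp only [map_zero, LinearMap.zero_apply, zero_add]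
    rw [b3_zero h hn hm hs]
    simp
  -- hence E (F z) = z
  have hEFz : E (F (B (B n (F m)) s)) = B (B n (F m)) s := by
    rw [apEF h, hEz, map_zero, hz1, zero_add]
  -- RHS has weight -1
  have hRw : H (F (B (B n (F m)) s)) = (-1:ℂ) • F (B (B n (F m)) s) :=
    HF_w1 h hz1
  -- both sides recovered via F ∘ E
  have hLrec := FE_wm1 h hL
  rw [← hLrec, hEL]
  -- antisymmetry
  have hanti := h.antisymm pm pn (F m) (h.evenF pm m hmg) n hng
  rw [hanti]
  simp only [map_neg, map_smul, LinearMap.neg_apply, LinearMap.smul_apply, neg_neg]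

end lemmas

/-- In a short `sl₂`-Lie superalgebra the triple product
`(m,n,r) = −[[m, f n], r]` satisfies the super Jordan-triple-like identity
`(m,n,(r,s,t)) = ((m,n,r),s,t) + (−1)^{|r|(|m|+|n|)+|m||n|}(r,(n,m,s),t)
 + (−1)^{(|m|+|n|)(|r|+|s|)}(r,s,(m,n,t))`. -/
theorem shortSL2_trip_SJT6
    {G : Type} [AddCommGroup G] [Module ℂ G]
    (gr : ZMod 2 → Submodule ℂ G)
    (B : G →ₗ[ℂ] G →ₗ[ℂ] G) (E F H : G →ₗ[ℂ] G)
    (h : ShortSL2 gr B E F H) :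
    ∀ pm pn pr ps pt : ZMod 2,
      ∀ m ∈ gr pm, ∀ n ∈ gr pn, ∀ r ∈ gr pr, ∀ s ∈ gr ps, ∀ t ∈ gr pt,
      H m = m → H n = n → H r = r → H s = s → H t = t →
      trip B F m n (trip B F r s t)
        = trip B F (trip B F m n r) s t
          + (sg pr (pm + pn) * sg pm pn) • trip B F r (trip B F n m s) t
          + sg (pm + pn) (pr + ps) • trip B F r s (trip B F m n t) := by
  intro pm pn pr ps pt m hmg n hng r hrg s hsg t htg hm hn hr hs ht
  have hFng : F n ∈ gr pn := h.evenF pn n hng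
  have hFsg : F s ∈ gr ps := h.evenF ps s hsg
  have hag : B m (F n) ∈ gr (pm + pn) := h.bracket_grade pm pn m hmg (F n) hFng
  have hyg : B r (F s) ∈ gr (pr + ps) := h.bracket_grade pr ps r hrg (F s) hFsg
  have j1 := h.jacobi (pm + pn) (pr + ps) (B m (F n)) hag (B r (F s)) hyg t
  have j2 := h.jacobi (pm + pn) pr (B m (F n)) hag r hrg (F s)
  have hkey := key_lemma h hmg hng hm hn hs
  have main : B (B m (F n)) (B (B r (F s)) t)
      = B (B (B (B m (F n)) r) (F s)) t
        + (sg (pm + pn) pr * sg pm pn) • B (B r (F (B (B n (F m)) s))) t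
        + sg (pm + pn) (pr + ps) • B (B r (F s)) (B (B m (F n)) t) := by
    rw [j1, j2, hkey]
    simp only [map_add, map_smul, LinearMap.add_apply, LinearMap.smul_apply, smul_smul]
  simp only [trip, map_neg, LinearMap.neg_apply, neg_neg, smul_neg]
  rw [main, sg_symm (pm + pn) pr]
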